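/- arXiv:1404.1106 — 2 statements merged into one kernel-verified Lean document; each statement's English description precedes it below -/
import Mathlib

section
/- For all points ζ₁, ζ₂, ζ₃, ζ₄ on the unit sphere S^{d-1} ⊂ ℝ^d satisfying ζ₁ + ζ₂ + ζ₃ + ζ₄ = 0, one has |ζ₁ + ζ₂|·|ζ₃ + ζ₄| + |ζ₁ + ζ₃|·|ζ₂ + ζ₄| + |ζ₁ + ζ₄|·|ζ₂ + ζ₃| = 4. -/
theorem sphere_four_point_identity (d : ℕ)
    (ζ₁ ζ₂ ζ₃ ζ₄ : EuclideanSpace ℝ (Fin d))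
    (h₁ : ‖ζ₁‖ = 1) (h₂ : ‖ζ₂‖ = 1) (h₃ : ‖ζ₃‖ = 1) (h₄ : ‖ζ₄‖ = 1)
    (hsum : ζ₁ + ζ₂ + ζ₃ + ζ₄ = 0) :
    ‖ζ₁ + ζ₂‖ * ‖ζ₃ + ζ₄‖ + ‖ζ₁ + ζ₃‖ * ‖ζ₂ + ζ₄‖ + ‖ζ₁ + ζ₄‖ * ‖ζ₂ + ζ₃‖ = 4 := by
  have h34 : ζ₃ + ζ₄ = -(ζ₁ + ζ₂) := by
    have := hsum; abel_nf at this ⊢; linear_combination (norm := abel_nf) this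
  have h24 : ζ₂ + ζ₄ = -(ζ₁ + ζ₃) := by
    linear_combination (norm := abel_nf) hsum
  have h23 : ζ₂ + ζ₃ = -(ζ₁ + ζ₄) := by
    linear_combination (norm := abel_nf) hsum
  have hrest : ζ₂ + ζ₃ + ζ₄ = -ζ₁ := by
    linear_combination (norm := abel_nf) hsum
  rw [h34, h24, h23, norm_neg, norm_neg, norm_neg]
  have e12 := @norm_add_sq_real (EuclideanSpace ℝ (Fin d)) _ _ ζ₁ ζ₂
  have e13 := @norm_add_sq_real (EuclideanSpace ℝ (Fin d)) _ _ ζ₁ ζ₃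
  have e14 := @norm_add_sq_real (EuclideanSpace ℝ (Fin d)) _ _ ζ₁ ζ₄
  have hin : inner ℝ ζ₁ ζ₂ + inner ℝ ζ₁ ζ₃ + inner ℝ ζ₁ ζ₄ = (-1 : ℝ) := by
    have : inner ℝ ζ₁ (ζ₂ + ζ₃ + ζ₄) = (-1 : ℝ) := by
      rw [hrest, inner_neg_right, real_inner_self_eq_norm_sq, h₁]; norm_num
    rw [inner_add_right, inner_add_right] at this
    linarith
  rw [h₁, h₂] at e12; rw [h₁, h₃] at e13; rw [h₁, h₄] at e14
  nlinarith [e12, e13, e14, hin]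
end

section
/- For every integer k ≥ 2, with τ_j := ∫_{−1}^{1} C_j^1(t) dt, the Funk–Hecke coefficient Λ_k(φ₄) := ω₂ ∫_{−1}^{1} (C_k^1(t)/C_k^1(1)) · φ₄(t) · (1−t²)^{1/2} dt with φ₄(t) = 2(1−t)^{1/2}(1+t)^{1/2} satisfies 2(k+1)/ω₂ · Λ_k(φ₄) = 2τ_k − τ_{k−2} − τ_{k+2}. Consequently Λ_{2j+1}(φ₄) = 0 for all j ≥ 0 and Λ_{2j}(φ₄) = (ω₂/(2(2j+1)))·(4/(2j+1) − 2/(2j−1) − 2/(2j+3)) < 0 for all j ≥ 1, while Λ₀(φ₄) = 32π/3 > 0. -/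
open Polynomial Polynomial.Chebyshev Real FormalMultilinearSeries
open scoped ENNReal NNReal

/- ### Auxiliary lemmas about Chebyshev polynomials of the second kind -/

private lemma abs_sin_nat_mul_le' (m : ℕ) (θ : ℝ) : |Real.sin (m * θ)| ≤ m * |Real.sin θ| := by
  induction m with
  | zero => simp
  | succ n ih =>
    have h : ((n : ℝ) + 1) * θ = n * θ + θ := by ring
    push_cast
    rw [h, Real.sin_add]
    have b1 : |Real.sin (n*θ) * Real.cos θ| ≤ (n:ℝ) * |Real.sin θ| := by
      rw [abs_mul]
      calc |Real.sin (n*θ)| * |Real.cos θ| ≤ ((n:ℝ) * |Real.sin θ|) * 1 :=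
            mul_le_mul ih (Real.abs_cos_le_one θ) (abs_nonneg _) (by positivity)
        _ = (n:ℝ) * |Real.sin θ| := by ring
    have b2 : |Real.cos (n*θ) * Real.sin θ| ≤ 1 * |Real.sin θ| := by
      rw [abs_mul]; gcongr; exact Real.abs_cos_le_one _
    calc |Real.sin (n*θ) * Real.cos θ + Real.cos (n*θ) * Real.sin θ|
        ≤ |Real.sin (n*θ) * Real.cos θ| + |Real.cos (n*θ) * Real.sin θ| := abs_add_le _ _
      _ ≤ (n:ℝ) * |Real.sin θ| + 1 * |Real.sin θ| := add_le_add b1 b2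
      _ = ((n:ℝ)+1) * |Real.sin θ| := by ring

private lemma U_eval_one' (n : ℕ) : (U ℝ n).eval 1 = (n : ℝ) + 1 := by
  induction n using Nat.twoStepInduction with
  | zero => simp
  | one => norm_num
  | more n ih2 ih1 =>
    have h := U_add_two ℝ (n : ℤ)
    have e2 : ((n : ℤ) + 2) = ((n+2 : ℕ) : ℤ) := by push_cast; ring
    have e1 : ((n : ℤ) + 1) = ((n+1 : ℕ) : ℤ) := by push_cast; ring
    rw [e2, e1] at h
    rw [h]
    simp only [eval_sub, eval_mul, eval_ofNat, eval_X]
    rw [ih1, ih2]; push_cast; ring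

private lemma U_eval_neg_one' (n : ℕ) : (U ℝ n).eval (-1) = (-1:ℝ)^n * ((n : ℝ) + 1) := by
  induction n using Nat.twoStepInduction with
  | zero => simp
  | one => norm_num
  | more n ih2 ih1 =>
    have h := U_add_two ℝ (n : ℤ)
    have e2 : ((n : ℤ) + 2) = ((n+2 : ℕ) : ℤ) := by push_cast; ring
    have e1 : ((n : ℤ) + 1) = ((n+1 : ℕ) : ℤ) := by push_cast; ring
    rw [e2, e1] at h
    rw [h]
    simp only [eval_sub, eval_mul, eval_ofNat, eval_X]
    rw [ih1, ih2]; push_cast; ring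

private lemma U_eval_abs_le' (t : ℝ) (ht : t ∈ Set.Icc (-1:ℝ) 1) (n : ℕ) :
    |(U ℝ n).eval t| ≤ (n : ℝ) + 1 := by
  obtain ⟨h1, h2⟩ := ht
  set θ := Real.arccos t with hθ
  have hcos : Real.cos θ = t := Real.cos_arccos h1 h2
  have hsin : 0 ≤ Real.sin θ :=
    Real.sin_nonneg_of_nonneg_of_le_pi (Real.arccos_nonneg t) (Real.arccos_le_pi t)
  rcases eq_or_lt_of_le hsin with h0 | hpos
  · have hpyth := Real.sin_sq_add_cos_sq θ
    rw [← h0, hcos] at hpyth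
    have : (t - 1) * (t + 1) = 0 := by nlinarith
    rcases mul_eq_zero.mp this with h | h
    · have ht1 : t = 1 := by linarith
      rw [ht1, U_eval_one']
      rw [abs_of_nonneg (by positivity)]
    · have ht1 : t = -1 := by linarith
      rw [ht1, U_eval_neg_one', abs_mul, abs_pow, abs_neg, abs_one, one_pow, one_mul,
        abs_of_nonneg (by positivity)]
  · have key := U_real_cos θ (n : ℤ)
    rw [hcos] at key
    have main : |(U ℝ n).eval t| * Real.sin θ ≤ ((n:ℝ)+1) * Real.sin θ := by
      calc |(U ℝ n).eval t| * Real.sin θ = |(U ℝ n).eval t * Real.sin θ| := by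
            rw [abs_mul, abs_of_nonneg hsin]
        _ = |Real.sin (((n:ℤ) + 1) * θ)| := by rw [key]
        _ = |Real.sin (((n+1 : ℕ):ℝ) * θ)| := by push_cast; ring_nf
        _ ≤ ((n+1:ℕ):ℝ) * |Real.sin θ| := abs_sin_nat_mul_le' (n+1) θ
        _ = ((n:ℝ)+1) * Real.sin θ := by rw [abs_of_nonneg hsin]; push_cast; ring
    exact le_of_mul_le_mul_right main hpos

/- ### The generating function of the Chebyshev `U` polynomials -/

private lemma summable_U' (t : ℝ) (ht : t ∈ Set.Icc (-1:ℝ) 1) (r : ℝ) (hr : |r| < 1) :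
    Summable (fun k : ℕ => (U ℝ k).eval t * r ^ k) := by
  have h1 : Summable (fun k : ℕ => (k:ℝ) ^ 1 * |r| ^ k) :=
    summable_pow_mul_geometric_of_norm_lt_one 1 (by rwa [Real.norm_eq_abs, abs_abs])
  have h2 : Summable (fun k : ℕ => |r| ^ k) := summable_geometric_of_lt_one (abs_nonneg r) hr
  apply Summable.of_norm_bounded (h1.add h2)
  intro k
  rw [Real.norm_eq_abs, abs_mul, abs_pow]
  calc |(U ℝ k).eval t| * |r| ^ k ≤ ((k:ℝ) + 1) * |r| ^ k := by
        gcongr; exact U_eval_abs_le' t ht k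
    _ = (k:ℝ)^1 * |r|^k + |r|^k := by ring

private lemma hasSum_U' (t : ℝ) (ht : t ∈ Set.Icc (-1:ℝ) 1) (r : ℝ) (hr : |r| < 1/2) :
    HasSum (fun k : ℕ => (U ℝ k).eval t * r ^ k) ((1 - 2*r*t + r^2)⁻¹) := by
  have habs : |r| < 1 := hr.trans (by norm_num)
  obtain ⟨S, hS⟩ := summable_U' t ht r habs
  have ht' : |t| ≤ 1 := abs_le.mpr ⟨ht.1, ht.2⟩
  have hq : (0:ℝ) < 1 - 2*r*t + r^2 := by
    have h2 : 2*r*t ≤ 2*|r| := by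
      calc 2*r*t ≤ |2*r*t| := le_abs_self _
        _ = 2*(|r| * |t|) := by rw [abs_mul, abs_mul, abs_two]; ring
        _ ≤ 2*(|r| * 1) := by gcongr
        _ = 2*|r| := by ring
    nlinarith [sq_abs r, sq_nonneg (1 - |r|), abs_nonneg r]
  set u : ℕ → ℝ := fun k => (U ℝ k).eval t with hu
  have hf2' : HasSum (fun k : ℕ => (2*t*r) * (u k * r ^ k)) ((2*t*r) * S) := hS.mul_left _
  have hf2 : HasSum (fun k : ℕ => if k = 0 then 0 else 2*t * u (k-1) * r ^ k) ((2*t*r) * S) := by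
    have := (hasSum_nat_add_iff (f := fun k : ℕ => if k = 0 then 0 else 2*t * u (k-1) * r ^ k)
      (g := (2*t*r) * S) 1).mp ?_
    · simpa using this
    · refine (congrArg (fun g => HasSum g ((2*t*r) * S)) ?_).mp hf2'
      funext k
      simp only [Nat.add_sub_cancel, if_neg (Nat.succ_ne_zero k)]
      ring
  have hf3' : HasSum (fun k : ℕ => (r^2) * (u k * r ^ k)) ((r^2) * S) := hS.mul_left _
  have hf3 : HasSum (fun k : ℕ => if k < 2 then 0 else u (k-2) * r ^ k) ((r^2) * S) := by
    have := (hasSum_nat_add_iff (f := fun k : ℕ => if k < 2 then 0 else u (k-2) * r ^ k)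
      (g := (r^2) * S) 2).mp ?_
    · simpa [Finset.sum_range_succ] using this
    · refine (congrArg (fun g => HasSum g ((r^2) * S)) ?_).mp hf3'
      funext k
      simp only [Nat.add_sub_cancel]
      rw [if_neg (by omega)]
      ring
  have hcomb : HasSum (fun k : ℕ => u k * r ^ k
      - (if k = 0 then 0 else 2*t * u (k-1) * r ^ k)
      + (if k < 2 then 0 else u (k-2) * r ^ k)) (S - 2*t*r*S + r^2*S) :=
    (hS.sub hf2).add hf3
  have hind : HasSum (fun k : ℕ => if k = 0 then (1:ℝ) else 0) 1 := hasSum_ite_eq 0 1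
  have hfun : (fun k : ℕ => u k * r ^ k
      - (if k = 0 then 0 else 2*t * u (k-1) * r ^ k)
      + (if k < 2 then 0 else u (k-2) * r ^ k)) = (fun k : ℕ => if k = 0 then (1:ℝ) else 0) := by
    funext k
    match k with
    | 0 => simp [hu]
    | 1 => norm_num [hu]
    | (m+2) =>
      simp only [if_neg (Nat.succ_ne_zero _), if_neg (by omega : ¬ m+2 < 2),
        Nat.add_sub_cancel]
      have hm1 : m + 2 - 1 = m + 1 := rfl
      rw [hm1]
      have hrec := U_add_two ℝ (m : ℤ)
      have e2 : ((m : ℤ) + 2) = ((m+2 : ℕ) : ℤ) := by push_cast; ring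
      have e1 : ((m : ℤ) + 1) = ((m+1 : ℕ) : ℤ) := by push_cast; ring
      rw [e2, e1] at hrec
      have := congrArg (Polynomial.eval t) hrec
      simp only [eval_sub, eval_mul, eval_ofNat, eval_X] at this
      simp only [hu, this]
      ring
  rw [hfun] at hcomb
  have hSval : S - 2*t*r*S + r^2*S = 1 := hcomb.unique hind
  have hfin : S = (1 - 2*r*t + r^2)⁻¹ := by
    field_simp
    linarith [hSval]
  rwa [hfin] at hS

/- ### Uniqueness of power series coefficients -/

private lemma hasFPS' (c : ℕ → ℝ) (f : ℝ → ℝ)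
    (hc : ∀ r : ℝ, |r| < 1/2 → HasSum (fun k : ℕ => c k * r ^ k) (f r)) :
    HasFPowerSeriesAt f (ofScalars ℝ c) 0 := by
  have hnorm : ∀ n, ‖ofScalars ℝ c n‖ = |c n| := by
    intro n
    rw [ofScalars]
    rw [norm_smul (c n) (ContinuousMultilinearMap.mkPiAlgebraFin ℝ n ℝ),
      ContinuousMultilinearMap.norm_mkPiAlgebraFin, Real.norm_eq_abs, mul_one]
  have hsum3 : Summable (fun k : ℕ => c k * (1/3 : ℝ) ^ k) :=
    (hc (1/3) (by rw [abs_of_nonneg] <;> norm_num)).summable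
  have htend : Filter.Tendsto (fun k : ℕ => |c k * (1/3 : ℝ) ^ k|) Filter.atTop (nhds 0) := by
    simpa using hsum3.tendsto_atTop_zero.abs
  obtain ⟨M, hM⟩ := htend.bddAbove_range
  have hMb : ∀ k : ℕ, |c k| * (1/3:ℝ)^k ≤ M := by
    intro k
    have := hM (Set.mem_range_self k)
    rwa [abs_mul, abs_pow, abs_of_nonneg (by norm_num : (0:ℝ) ≤ 1/3)] at this
  have hrad : (1/4 : ℝ≥0∞) ≤ (ofScalars ℝ c).radius := by
    have h : ((1/4 : ℝ≥0) : ℝ≥0∞) ≤ (ofScalars ℝ c).radius := by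
      apply le_radius_of_bound _ M
      intro n
      rw [hnorm]
      calc |c n| * ((1/4 : ℝ≥0) : ℝ) ^ n ≤ |c n| * (1/3:ℝ)^n :=
            mul_le_mul_of_nonneg_left
              (pow_le_pow_left₀ (by positivity) (by norm_num) n) (abs_nonneg _)
        _ ≤ M := hMb n
    convert h using 1
    simp
  have hball : HasFPowerSeriesOnBall f (ofScalars ℝ c) 0 (1/4) := by
    refine ⟨hrad, by norm_num, ?_⟩
    intro y hy
    have h4 : ((1/4:ℝ≥0) : ℝ≥0∞) = (1/4 : ℝ≥0∞) := by simp
    have hy1 : (‖y‖₊ : ℝ≥0∞) < 1/4 := by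
      rw [Metric.mem_eball, edist_zero_right] at hy
      exact hy
    have hy2 : ‖y‖₊ < (1/4 : ℝ≥0) := by rwa [← h4, ENNReal.coe_lt_coe] at hy1
    have hy3 : |y| < 1/4 := by
      rw [← Real.norm_eq_abs, ← coe_nnnorm]
      exact_mod_cast hy2
    have hy' : |y| < 1/2 := hy3.trans (by norm_num)
    have := hc y hy'
    rw [zero_add]
    simpa only [ofScalars_apply_eq, smul_eq_mul] using this
  exact hball.hasFPowerSeriesAt

private lemma coeff_unique' (a b : ℕ → ℝ) (f : ℝ → ℝ)
    (ha : ∀ r : ℝ, |r| < 1/2 → HasSum (fun k : ℕ => a k * r ^ k) (f r))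
    (hb : ∀ r : ℝ, |r| < 1/2 → HasSum (fun k : ℕ => b k * r ^ k) (f r)) :
    a = b :=
  ofScalars_series_injective ℝ ℝ ((hasFPS' a f ha).eq_formalMultilinearSeries (hasFPS' b f hb))

/- ### Integrals of Chebyshev `U` polynomials -/

private noncomputable def tauZ (n : ℤ) : ℝ := ∫ t in (-1:ℝ)..1, (U ℝ n).eval t

private lemma T_eval_one' (n : ℤ) : (T ℝ n).eval 1 = 1 := by
  have h := T_real_cos 0 n
  simpa using h

private lemma T_eval_neg_one' (n : ℤ) : (T ℝ n).eval (-1) = (-1:ℝ)^n := by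
  have h := T_real_cos π n
  rw [Real.cos_pi] at h
  rw [h]
  have h2 := Real.cos_int_mul_pi_sub 0 n
  simpa using h2

private lemma tau_eq' (n : ℤ) (h : ((n:ℝ) + 1) ≠ 0) :
    tauZ n = (1 - (-1:ℝ)^(n+1)) / ((n:ℝ)+1) := by
  have key : ∀ x ∈ Set.uIcc (-1:ℝ) 1,
      HasDerivAt (fun y => ((n:ℝ)+1)⁻¹ * (T ℝ (n+1)).eval y) ((U ℝ n).eval x) x := by
    intro x _
    have hp := ((T ℝ (n+1)).hasDerivAt x).const_mul (((n:ℝ)+1)⁻¹)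
    have hder : (T ℝ (n+1)).derivative = ((n+1 : ℤ) : ℝ[X]) * U ℝ n := by
      rw [T_derivative_eq_U]; simp
    rw [hder] at hp
    refine hp.congr_deriv ?_
    symm
    simp only [eval_mul, eval_intCast]
    push_cast
    field_simp
  have hInt : IntervalIntegrable (fun x => (U ℝ n).eval x) MeasureTheory.volume (-1) 1 :=
    ((U ℝ n).continuous).intervalIntegrable _ _
  rw [tauZ, intervalIntegral.integral_eq_sub_of_hasDerivAt key hInt,
    T_eval_one', T_eval_neg_one']
  field_simp

private lemma tau_even' (m : ℤ) : tauZ (2*m) = 2/(2*(m:ℝ)+1) := by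
  have hne : ((2*m : ℤ) : ℝ) + 1 ≠ 0 := by
    intro h
    have h2 : ((2*m+1 : ℤ) : ℝ) = 0 := by push_cast at h ⊢; linarith
    have := (Int.cast_eq_zero (α := ℝ)).mp h2
    omega
  rw [tau_eq' _ hne]
  have hodd : (-1:ℝ)^(2*m+1) = -1 := by
    rw [zpow_add₀ (by norm_num : (-1:ℝ) ≠ 0), zpow_mul]
    norm_num
  rw [hodd]
  push_cast
  norm_num

private lemma tau_odd' (m : ℤ) (hm : m ≠ -1) : tauZ (2*m+1) = 0 := by
  have hne : ((2*m+1 : ℤ) : ℝ) + 1 ≠ 0 := by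
    intro h
    have h2 : ((2*m+2 : ℤ) : ℝ) = 0 := by push_cast at h ⊢; linarith
    have := (Int.cast_eq_zero (α := ℝ)).mp h2
    omega
  rw [tau_eq' _ hne]
  have heven : (-1:ℝ)^(2*m+1+1) = 1 := by
    rw [show (2*m+1+1 : ℤ) = 2*(m+1) by ring, zpow_mul]
    norm_num
  rw [heven]
  norm_num

private lemma tau_neg_one' : tauZ (-1) = 0 := by simp [tauZ]

private lemma U_sq_identity' (n : ℤ) :
    (4:ℝ[X]) * Polynomial.X^2 * U ℝ n = U ℝ (n+2) + 2 * U ℝ n + U ℝ (n-2) := by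
  have h1 := U_add_two ℝ n
  have h2 := U_eq ℝ n
  have h3 := U_add_one ℝ n
  linear_combination (norm := ring_nf) -h1 - h2 - 2*(Polynomial.X : ℝ[X])*h3

private lemma J_eq' (n : ℤ) : (∫ t in (-1:ℝ)..1, (U ℝ n).eval t * (1-t^2)) =
    tauZ n - (tauZ (n+2) + 2*tauZ n + tauZ (n-2))/4 := by
  have hc : ∀ m : ℤ, IntervalIntegrable (fun x => (U ℝ m).eval x) MeasureTheory.volume (-1) 1 :=
    fun m => ((U ℝ m).continuous).intervalIntegrable _ _
  have hint : ∀ t : ℝ, (U ℝ n).eval t * (1-t^2) =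
      (U ℝ n).eval t - (1/4) * ((U ℝ (n+2)).eval t + 2*(U ℝ n).eval t + (U ℝ (n-2)).eval t) := by
    intro t
    have := congrArg (Polynomial.eval t) (U_sq_identity' n)
    simp only [eval_add, eval_mul, eval_pow, eval_X, eval_ofNat] at this
    nlinarith [this]
  have step1 : (∫ t in (-1:ℝ)..1, (U ℝ n).eval t * (1-t^2)) =
      ∫ t in (-1:ℝ)..1, ((U ℝ n).eval t
        - (1/4) * ((U ℝ (n+2)).eval t + 2*(U ℝ n).eval t + (U ℝ (n-2)).eval t)) := by
    apply intervalIntegral.integral_congr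
    intro t _
    exact hint t
  rw [step1]
  rw [intervalIntegral.integral_sub (hc n)
    (by apply IntervalIntegrable.const_mul
        exact ((hc (n+2)).add ((hc n).const_mul 2)).add (hc (n-2)))]
  rw [intervalIntegral.integral_const_mul]
  rw [intervalIntegral.integral_add (((hc (n+2))).add ((hc n).const_mul 2)) (hc (n-2)),
    intervalIntegral.integral_add (hc (n+2)) ((hc n).const_mul 2),
    intervalIntegral.integral_const_mul]
  show tauZ n - 1/4 * (tauZ (n+2) + 2 * tauZ n + tauZ (n-2)) = _
  ring

/- ### Statement definitions -/

/-- `C` is the family of Gegenbauer (ultraspherical) polynomials with parameter `α`,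
characterized by the generating function `(1 - 2rt + r²)^(-α) = Σ_k C_k^α(t) r^k`
for `t ∈ [-1, 1]` and `|r|` small. -/
def IsGegenbauer (α : ℝ) (C : ℕ → Polynomial ℝ) : Prop :=
  ∀ t ∈ Set.Icc (-1:ℝ) 1, ∀ r : ℝ, |r| < 1/2 →
    HasSum (fun k : ℕ => (C k).eval t * r ^ k) ((1 - 2*r*t + r^2) ^ (-α))

/-- The weight `φ₄(t) = 2 (1-t)^{1/2} (1+t)^{1/2}`. -/
noncomputable def phi4 (t : ℝ) : ℝ := 2 * Real.sqrt (1 - t) * Real.sqrt (1 + t)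

/-- The moments `τ_j = ∫_{-1}^1 C_j^1(t) dt`. -/
noncomputable def tauMoment (C : ℕ → Polynomial ℝ) (j : ℕ) : ℝ :=
  ∫ t in (-1:ℝ)..1, (C j).eval t

/-- The Funk–Hecke coefficient `Λ_k(φ₄)` in dimension `d = 4`, with `ω₂ = 4π`. -/
noncomputable def Lambda4 (C : ℕ → Polynomial ℝ) (k : ℕ) : ℝ :=
  (4 * Real.pi) *
    ∫ t in (-1:ℝ)..1, ((C k).eval t / (C k).eval 1) * phi4 t * Real.sqrt (1 - t^2)

/- ### Identification of a Gegenbauer family with parameter 1 -/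

private lemma C_eq_U' (C : ℕ → Polynomial ℝ) (hC : IsGegenbauer 1 C) :
    C = fun k : ℕ => U ℝ (k:ℤ) := by
  have hpt : ∀ t ∈ Set.Icc (-1:ℝ) 1, ∀ k : ℕ, (C k).eval t = (U ℝ (k:ℤ)).eval t := by
    intro t ht
    have hq : ∀ r : ℝ, |r| < 1/2 → (0:ℝ) < 1 - 2*r*t + r^2 := by
      intro r hr
      have ht' : |t| ≤ 1 := abs_le.mpr ⟨ht.1, ht.2⟩
      have h2 : 2*r*t ≤ 2*|r| := by
        calc 2*r*t ≤ |2*r*t| := le_abs_self _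
          _ = 2*(|r| * |t|) := by rw [abs_mul, abs_mul, abs_two]; ring
          _ ≤ 2*(|r| * 1) := by gcongr
          _ = 2*|r| := by ring
      nlinarith [sq_abs r, sq_nonneg (1 - |r|), abs_nonneg r]
    have ha : ∀ r : ℝ, |r| < 1/2 →
        HasSum (fun k : ℕ => (C k).eval t * r ^ k) ((1 - 2*r*t + r^2)⁻¹) := by
      intro r hr
      have := hC t ht r hr
      rwa [show (-(1:ℝ)) = (-1 : ℝ) by norm_num, Real.rpow_neg_one] at this
    have hb : ∀ r : ℝ, |r| < 1/2 →
        HasSum (fun k : ℕ => (U ℝ (k:ℤ)).eval t * r ^ k) ((1 - 2*r*t + r^2)⁻¹) :=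
      fun r hr => hasSum_U' t ht r hr
    have := coeff_unique' (fun k => (C k).eval t) (fun k => (U ℝ (k:ℤ)).eval t)
      (fun r => (1 - 2*r*t + r^2)⁻¹) ha hb
    intro k
    exact congrFun this k
  funext k
  apply Polynomial.eq_of_infinite_eval_eq
  exact Set.Infinite.mono (fun x hx => hpt x hx k)
    (Set.Icc_infinite (by norm_num : (-1:ℝ) < 1))

private lemma Lambda4_U' (k : ℕ) : Lambda4 (fun j : ℕ => U ℝ (j:ℤ)) k =
    8*Real.pi/((k:ℝ)+1) * ∫ t in (-1:ℝ)..1, (U ℝ (k:ℤ)).eval t * (1-t^2) := by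
  unfold Lambda4
  have h1 : ((fun j : ℕ => U ℝ (j:ℤ)) k).eval 1 = (k:ℝ)+1 := U_eval_one' k
  rw [h1]
  have hcong : (∫ t in (-1:ℝ)..1, ((U ℝ (k:ℤ)).eval t / ((k:ℝ)+1)) * phi4 t * Real.sqrt (1 - t^2))
      = ∫ t in (-1:ℝ)..1, (2/((k:ℝ)+1)) * ((U ℝ (k:ℤ)).eval t * (1-t^2)) := by
    apply intervalIntegral.integral_congr
    intro t ht
    rw [Set.uIcc_of_le (by norm_num : (-1:ℝ) ≤ 1)] at ht
    obtain ⟨hl, hr⟩ := ht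
    have hsq : (0:ℝ) ≤ 1 - t^2 := by nlinarith
    have hm : Real.sqrt (1-t) * Real.sqrt (1+t) = Real.sqrt (1-t^2) := by
      rw [← Real.sqrt_mul (by linarith : (0:ℝ) ≤ 1-t)]
      ring_nf
    have key2 : Real.sqrt (1-t) * Real.sqrt (1+t) * Real.sqrt (1-t^2) = 1-t^2 := by
      rw [hm, Real.mul_self_sqrt hsq]
    show (U ℝ (k:ℤ)).eval t / ((k:ℝ)+1) * phi4 t * Real.sqrt (1 - t^2)
      = 2/((k:ℝ)+1) * ((U ℝ (k:ℤ)).eval t * (1-t^2))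
    unfold phi4
    linear_combination ((U ℝ (k:ℤ)).eval t / ((k:ℝ)+1) * 2) * key2
  rw [hcong, intervalIntegral.integral_const_mul]
  ring

theorem funk_hecke_coefficients_dimension_four (C : ℕ → Polynomial ℝ)
    (hC : IsGegenbauer 1 C) :
    (∀ k : ℕ, 2 ≤ k →
        2 * ((k : ℝ) + 1) / (4 * Real.pi) * Lambda4 C k =
          2 * tauMoment C k - tauMoment C (k - 2) - tauMoment C (k + 2)) ∧
      (∀ j : ℕ, Lambda4 C (2 * j + 1) = 0) ∧
      (∀ j : ℕ, 1 ≤ j →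
        Lambda4 C (2 * j) =
            (4 * Real.pi) / (2 * (2 * (j : ℝ) + 1)) *
              (4 / (2 * (j : ℝ) + 1) - 2 / (2 * (j : ℝ) - 1) - 2 / (2 * (j : ℝ) + 3)) ∧
          Lambda4 C (2 * j) < 0) ∧
      (Lambda4 C 0 = 32 * Real.pi / 3 ∧ 0 < Lambda4 C 0) := by
  rw [C_eq_U' C hC]
  have htau : ∀ j : ℕ, tauMoment (fun i : ℕ => U ℝ (i:ℤ)) j = tauZ (j:ℤ) := fun j => rfl
  have hπ : Real.pi ≠ 0 := Real.pi_ne_zero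
  refine ⟨?_, ?_, ?_, ?_⟩
  · -- Part 1
    intro k hk
    rw [Lambda4_U' k, J_eq', htau, htau, htau]
    have hc2 : ((k-2:ℕ):ℤ) = (k:ℤ)-2 := by omega
    have hc2' : ((k+2:ℕ):ℤ) = (k:ℤ)+2 := by push_cast; ring
    rw [hc2, hc2']
    have hk1 : (k:ℝ)+1 ≠ 0 := by positivity
    field_simp
    ring
  · -- Part 2
    intro j
    rw [Lambda4_U', J_eq']
    have i0 : ((2*j+1:ℕ):ℤ) = 2*(j:ℤ)+1 := by push_cast; ring
    rw [i0]
    have t1 : tauZ (2*(j:ℤ)+1) = 0 := tau_odd' _ (by omega)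
    have t2 : tauZ (2*(j:ℤ)+1+2) = 0 := by
      rw [show (2*(j:ℤ)+1+2) = 2*((j:ℤ)+1)+1 by ring]
      exact tau_odd' _ (by omega)
    have t3 : tauZ (2*(j:ℤ)+1-2) = 0 := by
      rcases Nat.eq_zero_or_pos j with h|h
      · subst h
        simpa using tau_neg_one'
      · rw [show (2*(j:ℤ)+1-2) = 2*((j:ℤ)-1)+1 by ring]
        exact tau_odd' _ (by omega)
    rw [t1, t2, t3]
    ring
  · -- Part 3
    intro j hj
    have hL := Lambda4_U' (2*j)
    rw [J_eq'] at hL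
    have i0 : ((2*j:ℕ):ℤ) = 2*(j:ℤ) := by push_cast; ring
    rw [i0, show (2*(j:ℤ)+2) = 2*((j:ℤ)+1) by ring,
      show (2*(j:ℤ)-2) = 2*((j:ℤ)-1) by ring,
      tau_even', tau_even', tau_even'] at hL
    push_cast at hL
    have hj1 : (1:ℝ) ≤ (j:ℝ) := by exact_mod_cast hj
    have d1 : (0:ℝ) < 2*(j:ℝ)+1 := by linarith
    have d2 : (0:ℝ) < 2*(j:ℝ)-1 := by linarith
    have d3 : (0:ℝ) < 2*(j:ℝ)+3 := by linarith
    have d1' : (2*(j:ℝ)+1) ≠ 0 := d1.ne'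
    have d2' : (2*(j:ℝ)-1) ≠ 0 := d2.ne'
    have d3' : (2*(j:ℝ)+3) ≠ 0 := d3.ne'
    have d2'' : (2*((j:ℝ)-1)+1) ≠ 0 := by intro h; apply d2'; linarith
    have d3'' : (2*((j:ℝ)+1)+1) ≠ 0 := by intro h; apply d3'; linarith
    have heq : Lambda4 (fun i : ℕ => U ℝ (i:ℤ)) (2*j) =
        (4 * Real.pi) / (2 * (2 * (j : ℝ) + 1)) *
          (4 / (2 * (j : ℝ) + 1) - 2 / (2 * (j : ℝ) - 1) - 2 / (2 * (j : ℝ) + 3)) := by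
      rw [hL]
      field_simp
      ring
    refine ⟨heq, ?_⟩
    rw [heq]
    have hneg : 4 / (2 * (j : ℝ) + 1) - 2 / (2 * (j : ℝ) - 1) - 2 / (2 * (j : ℝ) + 3)
        = -16/((2*(j:ℝ)+1)*((2*(j:ℝ)-1)*(2*(j:ℝ)+3))) := by
      field_simp
      ring
    rw [hneg]
    apply mul_neg_of_pos_of_neg
    · positivity
    · apply div_neg_of_neg_of_pos
      · norm_num
      · positivity
  · -- Part 4
    have hL := Lambda4_U' 0
    rw [J_eq'] at hL
    have t0 : tauZ ((0:ℕ):ℤ) = 2 := by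
      have := tau_even' 0
      norm_num at this
      simpa using this
    have t2 : tauZ (((0:ℕ):ℤ)+2) = 2/3 := by
      have := tau_even' 1
      norm_num at this
      simpa using this
    have tm2 : tauZ (((0:ℕ):ℤ)-2) = -2 := by
      have := tau_even' (-1)
      norm_num at this
      simpa using this
    rw [t0, t2, tm2] at hL
    norm_num at hL
    constructor
    · rw [hL]
      ring
    · rw [hL]
      positivity
end
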